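/- arXiv:2510.02514 — 2 statements merged into one kernel-verified Lean document; each statement's English description precedes it below -/
import Mathlib

section
/- (Tweedie–Miyasawa formula.) Let p be a probability density on ℝ^d with finite first moment, ∫ ‖x‖ p(x) dx < ∞. Then for every γ > 0 and every y ∈ ℝ^d, q_γ is differentiable at y and ∇ log q_γ(y) = m_γ(y) − y/γ. -/
open MeasureTheory Real

noncomputable def gaussDensity (d : ℕ) (γ : ℝ) (w : EuclideanSpace ℝ (Fin d)) : ℝ :=
  (2 * Real.pi * γ) ^ (-(d : ℝ) / 2) * Real.exp (-‖w‖ ^ 2 / (2 * γ))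

noncomputable def smoothedDensity (d : ℕ) (p : EuclideanSpace ℝ (Fin d) → ℝ) (γ : ℝ)
    (y : EuclideanSpace ℝ (Fin d)) : ℝ :=
  ∫ x, p x * gaussDensity d γ (y - γ • x)

def IsProbDensity (d : ℕ) (p : EuclideanSpace ℝ (Fin d) → ℝ) : Prop :=
  Measurable p ∧ (∀ x, 0 ≤ p x) ∧ ∫ x, p x = 1

/-- Posterior mean `m_γ(y) = E[x | y_γ = y]` of the channel `y_γ = γ x + w`, `w ~ N(0, γI)`. -/
noncomputable def postMean (d : ℕ) (p : EuclideanSpace ℝ (Fin d) → ℝ) (γ : ℝ)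
    (y : EuclideanSpace ℝ (Fin d)) : EuclideanSpace ℝ (Fin d) :=
  (smoothedDensity d p γ y)⁻¹ • ∫ x, (p x * gaussDensity d γ (y - γ • x)) • x

open InnerProductSpace in
lemma gauss_hasFDerivAt (d : ℕ) {γ : ℝ} (hγ : 0 < γ) (x z : EuclideanSpace ℝ (Fin d)) :
    HasFDerivAt (fun w : EuclideanSpace ℝ (Fin d) => gaussDensity d γ (w - γ • x))
      (toDual ℝ _ ((-γ⁻¹ * gaussDensity d γ (z - γ • x)) • (z - γ • x))) z := by
  have h1 : HasFDerivAt (fun w : EuclideanSpace ℝ (Fin d) => w - γ • x)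
      (ContinuousLinearMap.id ℝ _) z := (hasFDerivAt_id z).sub_const _
  have h3 := ((h1.norm_sq.neg.const_mul ((2 * γ)⁻¹)).exp).const_mul
    ((2 * Real.pi * γ) ^ (-(d : ℝ) / 2))
  have hfun : (fun w : EuclideanSpace ℝ (Fin d) => gaussDensity d γ (w - γ • x)) =
      fun w => (2 * Real.pi * γ) ^ (-(d : ℝ) / 2) *
        Real.exp ((2 * γ)⁻¹ * -‖w - γ • x‖ ^ 2) := by
    funext w
    simp only [gaussDensity]
    congr 1
    ring
  rw [hfun]
  refine h3.congr_fderiv ?_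
  ext v
  have hγ' : γ ≠ 0 := ne_of_gt hγ
  simp [gaussDensity, toDual_apply_apply, real_inner_smul_left, ContinuousLinearMap.smul_apply,
    div_eq_mul_inv, mul_inv]
  ring

lemma gauss_continuous (d : ℕ) (γ : ℝ) : Continuous (gaussDensity d γ) := by
  unfold gaussDensity
  fun_prop

lemma gauss_pos (d : ℕ) {γ : ℝ} (hγ : 0 < γ) (w : EuclideanSpace ℝ (Fin d)) :
    0 < gaussDensity d γ w :=
  mul_pos (Real.rpow_pos_of_pos (by positivity) _) (Real.exp_pos _)

lemma gauss_le (d : ℕ) {γ : ℝ} (hγ : 0 < γ) (w : EuclideanSpace ℝ (Fin d)) :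
    gaussDensity d γ w ≤ (2 * Real.pi * γ) ^ (-(d : ℝ) / 2) := by
  have h1 : Real.exp (-‖w‖ ^ 2 / (2 * γ)) ≤ 1 := by
    rw [Real.exp_le_one_iff]
    exact div_nonpos_of_nonpos_of_nonneg (neg_nonpos.2 (by positivity)) (by positivity)
  calc gaussDensity d γ w ≤ (2 * Real.pi * γ) ^ (-(d : ℝ) / 2) * 1 := by
        exact mul_le_mul_of_nonneg_left h1 (Real.rpow_pos_of_pos (by positivity) _).le
    _ = _ := mul_one _

/-- **Tweedie–Miyasawa formula.** For a probability density with finite first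
moment, for every `γ > 0` and every `y`, the smoothed density is differentiable at `y` and
`∇ log q_γ(y) = m_γ(y) − y/γ`. -/
theorem tweedie_miyasawa (d : ℕ) (p : EuclideanSpace ℝ (Fin d) → ℝ)
    (hp : IsProbDensity d p) (hmom : Integrable (fun x => ‖x‖ * p x))
    (γ : ℝ) (hγ : 0 < γ) (y : EuclideanSpace ℝ (Fin d)) :
    DifferentiableAt ℝ (smoothedDensity d p γ) y ∧
    gradient (fun z => Real.log (smoothedDensity d p γ z)) y
      = postMean d p γ y - γ⁻¹ • y := by
  classical
  obtain ⟨hpm, hp0, hp1⟩ := hp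
  have hγ' : γ ≠ 0 := ne_of_gt hγ
  set C : ℝ := (2 * Real.pi * γ) ^ (-(d : ℝ) / 2) with hCdef
  have hC : 0 < C := Real.rpow_pos_of_pos (by positivity) _
  have hpInt : Integrable p := by
    by_contra h
    rw [integral_undef h] at hp1
    exact one_ne_zero hp1.symm
  set F : EuclideanSpace ℝ (Fin d) → EuclideanSpace ℝ (Fin d) → ℝ :=
    fun z a => p a * gaussDensity d γ (z - γ • a) with hF
  have hcz : ∀ z : EuclideanSpace ℝ (Fin d),
      Continuous fun a : EuclideanSpace ℝ (Fin d) => gaussDensity d γ (z - γ • a) :=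
    fun z => (gauss_continuous d γ).comp (by fun_prop)
  have hFmeas : ∀ z : EuclideanSpace ℝ (Fin d), AEStronglyMeasurable (F z) volume :=
    fun z => (hpm.mul (hcz z).measurable).aestronglyMeasurable
  have hFnonneg : ∀ z a, 0 ≤ F z a := fun z a =>
    mul_nonneg (hp0 a) (gauss_pos d hγ _).le
  have hFle : ∀ z a, F z a ≤ C * p a := by
    intro z a
    rw [mul_comm C]
    exact mul_le_mul_of_nonneg_left (gauss_le d hγ _) (hp0 a)
  have hFInt : ∀ z : EuclideanSpace ℝ (Fin d), Integrable (F z) := by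
    intro z
    refine (hpInt.const_mul C).mono' (hFmeas z) (Filter.Eventually.of_forall fun a => ?_)
    rw [Real.norm_of_nonneg (hFnonneg z a)]
    exact hFle z a
  have hIInt : Integrable (fun a : EuclideanSpace ℝ (Fin d) => F y a • a) := by
    refine (hmom.const_mul C).mono' ((hFmeas y).smul aestronglyMeasurable_id)
      (Filter.Eventually.of_forall fun a => ?_)
    rw [norm_smul, Real.norm_of_nonneg (hFnonneg y a)]
    calc F y a * ‖a‖ ≤ (C * p a) * ‖a‖ :=
          mul_le_mul_of_nonneg_right (hFle y a) (norm_nonneg a)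
      _ = C * (‖a‖ * p a) := by ring
  set G : EuclideanSpace ℝ (Fin d) → EuclideanSpace ℝ (Fin d) → EuclideanSpace ℝ (Fin d) :=
    fun z a => p a • ((-γ⁻¹ * gaussDensity d γ (z - γ • a)) • (z - γ • a)) with hG
  set F' : EuclideanSpace ℝ (Fin d) → EuclideanSpace ℝ (Fin d) →
      (EuclideanSpace ℝ (Fin d) →L[ℝ] ℝ) :=
    fun z a => InnerProductSpace.toDual ℝ _ (G z a) with hF'
  have hdiff : ∀ a : EuclideanSpace ℝ (Fin d), ∀ z ∈ Metric.ball y 1,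
      HasFDerivAt (fun w => F w a) (F' z a) z := by
    intro a z _
    have h := (gauss_hasFDerivAt d hγ a z).const_mul (p a)
    simpa [hF, hF', hG, _root_.map_smul] using h
  have hGnorm : ∀ a : EuclideanSpace ℝ (Fin d), ∀ z ∈ Metric.ball y 1,
      ‖G z a‖ ≤ γ⁻¹ * C * ((1 + ‖y‖) * p a + γ * (‖a‖ * p a)) := by
    intro a z hz
    have hzy : ‖z - y‖ < 1 := by
      rw [Metric.mem_ball, dist_eq_norm] at hz; exact hz
    have hza : ‖z - γ • a‖ ≤ 1 + ‖y‖ + γ * ‖a‖ := by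
      calc ‖z - γ • a‖ = ‖(z - y) + (y - γ • a)‖ := by congr 1; abel
        _ ≤ ‖z - y‖ + ‖y - γ • a‖ := norm_add_le _ _
        _ ≤ ‖z - y‖ + (‖y‖ + ‖γ • a‖) := by gcongr; exact norm_sub_le _ _
        _ ≤ 1 + (‖y‖ + γ * ‖a‖) := by
            rw [norm_smul, Real.norm_of_nonneg hγ.le]; gcongr
        _ = 1 + ‖y‖ + γ * ‖a‖ := by ring
    have hg := gauss_le d hγ (z - γ • a)
    have hgpos := (gauss_pos d hγ (z - γ • a)).le
    rw [hG]
    simp only [norm_smul, Real.norm_of_nonneg (hp0 a), norm_mul,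
      Real.norm_of_nonneg hgpos, norm_neg, Real.norm_of_nonneg (inv_nonneg.2 hγ.le)]
    calc p a * (γ⁻¹ * gaussDensity d γ (z - γ • a) * ‖z - γ • a‖)
        ≤ p a * (γ⁻¹ * C * (1 + ‖y‖ + γ * ‖a‖)) := by
          refine mul_le_mul_of_nonneg_left ?_ (hp0 a)
          refine mul_le_mul (by gcongr) hza (norm_nonneg _) (by positivity)
      _ = γ⁻¹ * C * ((1 + ‖y‖) * p a + γ * (‖a‖ * p a)) := by ring
  have hboundInt : Integrable (fun a : EuclideanSpace ℝ (Fin d) =>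
      γ⁻¹ * C * ((1 + ‖y‖) * p a + γ * (‖a‖ * p a))) := by
    have h1 : Integrable (fun a : EuclideanSpace ℝ (Fin d) =>
        (1 + ‖y‖) * p a + γ * (‖a‖ * p a)) :=
      (hpInt.const_mul (1 + ‖y‖)).add (hmom.const_mul γ)
    exact h1.const_mul (γ⁻¹ * C)
  have hGmeas : AEStronglyMeasurable (G y) volume := by
    have hc : Continuous fun a : EuclideanSpace ℝ (Fin d) =>
        (-γ⁻¹ * gaussDensity d γ (y - γ • a)) • (y - γ • a) :=
      (continuous_const.mul (hcz y)).smul (by fun_prop)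
    exact (hpm.smul hc.measurable).aestronglyMeasurable
  have hF'meas : AEStronglyMeasurable (F' y) volume :=
    (InnerProductSpace.toDual ℝ (EuclideanSpace ℝ (Fin d))).continuous.comp_aestronglyMeasurable
      hGmeas
  have hGInt : Integrable (G y) := by
    refine hboundInt.mono' hGmeas (Filter.Eventually.of_forall fun a => ?_)
    exact hGnorm a y (Metric.mem_ball_self one_pos)
  have hmain : HasFDerivAt (fun z => ∫ a, F z a) (∫ a, F' y a) y := by
    refine hasFDerivAt_integral_of_dominated_of_fderiv_le (F := F) (F' := F')
      (bound := fun a => γ⁻¹ * C * ((1 + ‖y‖) * p a + γ * (‖a‖ * p a)))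
      (Metric.ball_mem_nhds y one_pos) (Filter.Eventually.of_forall hFmeas) (hFInt y) hF'meas ?_ hboundInt ?_
    · refine Filter.Eventually.of_forall fun a => fun z hz => ?_
      rw [hF', LinearIsometryEquiv.norm_map]
      exact hGnorm a z hz
    · exact Filter.Eventually.of_forall fun a z hz => hdiff a z hz
  have hInt_eq : (∫ a, F' y a)
      = InnerProductSpace.toDual ℝ (EuclideanSpace ℝ (Fin d)) (∫ a, G y a) := by
    rw [hF']
    exact (InnerProductSpace.toDual ℝ (EuclideanSpace ℝ (Fin d))).toLinearIsometry.integral_comp_comm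
      (G y)
  set q : ℝ := smoothedDensity d p γ y with hq
  have hqF : q = ∫ a, F y a := rfl
  have hqpos : 0 < q := by
    rw [hqF, integral_pos_iff_support_of_nonneg (hFnonneg y) (hFInt y)]
    have hsupp : Function.support (F y) = Function.support p := by
      ext a
      simp [hF, Function.mem_support, mul_ne_zero_iff, (gauss_pos d hγ (y - γ • a)).ne']
    rw [hsupp]
    exact (integral_pos_iff_support_of_nonneg hp0 hpInt).1 (by rw [hp1]; exact one_pos)
  have hGsplit : ∀ a : EuclideanSpace ℝ (Fin d),
      G y a = F y a • a - (γ⁻¹ * F y a) • y := by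
    intro a
    rw [hG, hF]
    simp only
    match_scalars <;> field_simp
  have hGint_eq : (∫ a, G y a) = (∫ a, F y a • a) - (γ⁻¹ * q) • y := by
    simp_rw [hGsplit]
    rw [integral_sub hIInt (((hFInt y).const_mul γ⁻¹).smul_const y),
      integral_smul_const, integral_const_mul, hqF]
  have hsd : smoothedDensity d p γ = fun z => ∫ a, F z a := rfl
  have hmain' : HasFDerivAt (smoothedDensity d p γ)
      (InnerProductSpace.toDual ℝ (EuclideanSpace ℝ (Fin d)) (∫ a, G y a)) y := by
    rw [hsd, ← hInt_eq]; exact hmain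
  refine ⟨hmain'.differentiableAt, ?_⟩
  have hlog := hmain'.log hqpos.ne'
  have hgrad : HasGradientAt (fun z => Real.log (smoothedDensity d p γ z))
      (q⁻¹ • ∫ a, G y a) y := by
    rw [hasGradientAt_iff_hasFDerivAt, _root_.map_smul]
    exact hlog
  rw [hgrad.gradient, hGint_eq, smul_sub, smul_smul]
  have h1 : q⁻¹ * (γ⁻¹ * q) = γ⁻¹ := by field_simp
  rw [h1]
  rfl
end

section
/- (Invariance of the IEM under Euclidean isometries.) Let p be a probability density on ℝ^d, let A be a d×d orthogonal matrix (AᵀA = I), let b ∈ ℝ^d, and set φ(x) = Ax + b. Let p^φ(x) := p(Aᵀ(x − b)) denote the density of φ(X) when X has density p. Then for all x₁, x₂ ∈ ℝ^d and all Γ > 0, IEM_{p^φ}(φ(x₁), φ(x₂), Γ) = IEM_p(x₁, x₂, Γ). -/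
open MeasureTheory Real Set Matrix
open scoped ENNReal

noncomputable def scoreFn (d : ℕ) (p : EuclideanSpace ℝ (Fin d) → ℝ) (γ : ℝ)
    (y : EuclideanSpace ℝ (Fin d)) : EuclideanSpace ℝ (Fin d) :=
  gradient (fun z => Real.log (smoothedDensity d p γ z)) y

noncomputable def IEMsq (d : ℕ) (p : EuclideanSpace ℝ (Fin d) → ℝ) (Γ : ℝ)
    (x₁ x₂ : EuclideanSpace ℝ (Fin d)) : ℝ≥0∞ :=
  ∫⁻ γ in Set.Ioc (0 : ℝ) Γ,
    ∫⁻ w, ENNReal.ofReal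
      (‖scoreFn d p γ (γ • x₁ + w) - scoreFn d p γ (γ • x₂ + w)‖ ^ 2 * gaussDensity d γ w)

noncomputable def IEM (d : ℕ) (p : EuclideanSpace ℝ (Fin d) → ℝ) (Γ : ℝ)
    (x₁ x₂ : EuclideanSpace ℝ (Fin d)) : ℝ :=
  Real.sqrt (IEMsq d p Γ x₁ x₂).toReal

/-- A `d×d` matrix acting on `EuclideanSpace ℝ (Fin d)`. -/
noncomputable def mvE (d : ℕ) (M : Matrix (Fin d) (Fin d) ℝ)
    (v : EuclideanSpace ℝ (Fin d)) : EuclideanSpace ℝ (Fin d) :=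
  (EuclideanSpace.equiv (Fin d) ℝ).symm (M.mulVec (EuclideanSpace.equiv (Fin d) ℝ v))

section Aux

variable {d : ℕ}

lemma mvE_apply (M : Matrix (Fin d) (Fin d) ℝ) (v : EuclideanSpace ℝ (Fin d)) (i : Fin d) :
    mvE d M v i = M.mulVec v i := rfl

lemma mvE_inner (A : Matrix (Fin d) (Fin d) ℝ) (hA : Aᵀ * A = 1) (x y : EuclideanSpace ℝ (Fin d)) :
    (inner ℝ (mvE d A x) (mvE d A y) : ℝ) = inner ℝ x y := by
  simp only [PiLp.inner_apply, RCLike.inner_apply, conj_trivial, mvE_apply]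
  have : ∑ i, A.mulVec y i * A.mulVec x i = (A *ᵥ (y : Fin d → ℝ)) ⬝ᵥ (A *ᵥ (x : Fin d → ℝ)) := rfl
  rw [this, Matrix.dotProduct_mulVec, ← Matrix.mulVec_transpose, Matrix.mulVec_mulVec, hA,
    Matrix.one_mulVec]
  rfl

/-- The linear isometry equivalence of `EuclideanSpace` given by an orthogonal matrix. -/
noncomputable def orthEquiv (A : Matrix (Fin d) (Fin d) ℝ) (hA : Aᵀ * A = 1) :
    EuclideanSpace ℝ (Fin d) ≃ₗᵢ[ℝ] EuclideanSpace ℝ (Fin d) :=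
  LinearEquiv.isometryOfInner
    { toFun := mvE d A
      invFun := mvE d Aᵀ
      map_add' := by
        intro u v
        ext i
        exact congrFun (A.mulVec_add u v) i
      map_smul' := by
        intro c v
        ext i
        exact congrFun (A.mulVec_smul c v) i
      left_inv := by
        intro v
        ext i
        simp only [mvE_apply]
        rw [show (mvE d A v : Fin d → ℝ) = A *ᵥ (v : Fin d → ℝ) from rfl,
          Matrix.mulVec_mulVec, hA, Matrix.one_mulVec]
      right_inv := by
        intro v
        ext i
        simp only [mvE_apply]
        rw [show (mvE d Aᵀ v : Fin d → ℝ) = Aᵀ *ᵥ (v : Fin d → ℝ) from rfl,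
          Matrix.mulVec_mulVec, _root_.mul_eq_one_comm.mp hA, Matrix.one_mulVec] }
    (mvE_inner A hA)

lemma orthEquiv_apply (A : Matrix (Fin d) (Fin d) ℝ) (hA : Aᵀ * A = 1)
    (v : EuclideanSpace ℝ (Fin d)) : orthEquiv A hA v = mvE d A v := rfl

lemma orthEquiv_symm_apply (A : Matrix (Fin d) (Fin d) ℝ) (hA : Aᵀ * A = 1)
    (v : EuclideanSpace ℝ (Fin d)) : (orthEquiv A hA).symm v = mvE d Aᵀ v := rfl

lemma gradient_comp_isometry {F : Type*} [NormedAddCommGroup F] [InnerProductSpace ℝ F]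
    [CompleteSpace F] (e : F ≃ₗᵢ[ℝ] F) (c : F) (f : F → ℝ) (y : F) :
    gradient (fun x => f (e x + c)) y = e.symm (gradient f (e y + c)) := by
  have hT : HasFDerivAt (fun x : F => e x + c)
      (e.toContinuousLinearEquiv : F →L[ℝ] F) y :=
    ((e.toContinuousLinearEquiv : F →L[ℝ] F).hasFDerivAt).add_const c
  have key : fderiv ℝ (fun x => f (e x + c)) y
      = (fderiv ℝ f (e y + c)).comp (e.toContinuousLinearEquiv : F →L[ℝ] F) := by
    by_cases h : DifferentiableAt ℝ f (e y + c)
    · exact (h.hasFDerivAt.comp y hT).fderiv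
    · have h2 : ¬ DifferentiableAt ℝ (fun x => f (e x + c)) y := by
        intro h2
        apply h
        have hg : DifferentiableAt ℝ (fun z : F => e.symm (z - c)) (e y + c) := by
          apply DifferentiableAt.comp
          · exact (e.symm.toContinuousLinearEquiv : F →L[ℝ] F).differentiableAt
          · exact (differentiable_id.sub_const c).differentiableAt
        have := DifferentiableAt.comp (𝕜 := ℝ) (g := fun x => f (e x + c))
          (f := fun z : F => e.symm (z - c)) (e y + c) (by simpa using h2) hg
        simpa [Function.comp_def] using this
      rw [fderiv_zero_of_not_differentiableAt h, fderiv_zero_of_not_differentiableAt h2,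
        ContinuousLinearMap.zero_comp]
  unfold gradient
  rw [key]
  apply ext_inner_right ℝ
  intro v
  rw [InnerProductSpace.toDual_symm_apply]
  rw [← e.inner_map_map ((InnerProductSpace.toDual ℝ F).symm (fderiv ℝ f (e y + c))
    |> e.symm) v, e.apply_symm_apply, InnerProductSpace.toDual_symm_apply]
  rfl

lemma gaussDensity_congr (γ : ℝ) {w w' : EuclideanSpace ℝ (Fin d)} (h : ‖w‖ = ‖w'‖) :
    gaussDensity d γ w = gaussDensity d γ w' := by
  unfold gaussDensity; rw [h]

lemma smoothed_shift (e : EuclideanSpace ℝ (Fin d) ≃ₗᵢ[ℝ] EuclideanSpace ℝ (Fin d))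
    (b : EuclideanSpace ℝ (Fin d)) (p : EuclideanSpace ℝ (Fin d) → ℝ) (γ : ℝ)
    (y : EuclideanSpace ℝ (Fin d)) :
    smoothedDensity d (fun x => p (e.symm (x - b))) γ y
      = smoothedDensity d p γ (e.symm (y - γ • b)) := by
  unfold smoothedDensity
  have hmp : MeasurePreserving (fun u : EuclideanSpace ℝ (Fin d) => e u + b) volume volume :=
    (measurePreserving_add_right volume b).comp e.measurePreserving
  have hemb : MeasurableEmbedding (fun u : EuclideanSpace ℝ (Fin d) => e u + b) :=
    (e.toHomeomorph.trans (Homeomorph.addRight b)).measurableEmbedding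
  rw [← hmp.integral_comp hemb]
  congr 1
  funext u
  have h1 : e.symm (e u + b - b) = u := by simp
  show p (e.symm (e u + b - b)) * gaussDensity d γ (y - γ • (e u + b))
      = p u * gaussDensity d γ (e.symm (y - γ • b) - γ • u)
  rw [h1]
  congr 1
  apply gaussDensity_congr
  rw [← e.symm.norm_map (y - γ • (e u + b))]
  congr 1
  simp [smul_add, map_sub, sub_sub, add_comm]

lemma score_shift (e : EuclideanSpace ℝ (Fin d) ≃ₗᵢ[ℝ] EuclideanSpace ℝ (Fin d))
    (b : EuclideanSpace ℝ (Fin d)) (p : EuclideanSpace ℝ (Fin d) → ℝ) (γ : ℝ)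
    (z : EuclideanSpace ℝ (Fin d)) :
    scoreFn d (fun x => p (e.symm (x - b))) γ z
      = e (scoreFn d p γ (e.symm (z - γ • b))) := by
  unfold scoreFn
  have hfun : (fun w => Real.log (smoothedDensity d (fun x => p (e.symm (x - b))) γ w))
      = fun w => Real.log (smoothedDensity d p γ (e.symm w + (-(e.symm (γ • b))))) := by
    funext w
    rw [smoothed_shift]
    congr 2
    rw [map_sub, sub_eq_add_neg]
  rw [hfun, gradient_comp_isometry e.symm (-(e.symm (γ • b)))
    (fun u => Real.log (smoothedDensity d p γ u)) z]
  rw [LinearIsometryEquiv.symm_symm]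
  congr 1
  rw [map_sub, sub_eq_add_neg]

end Aux

/-- **invariance of the IEM under Euclidean isometries.**
Let `φ(x) = Ax + b` with `A` orthogonal, and let `p^φ(x) = p(Aᵀ(x − b))` be the density of
`φ(X)` when `X ~ p`. Then `IEM_{p^φ}(φ(x₁), φ(x₂), Γ) = IEM_p(x₁, x₂, Γ)`. -/
theorem IEM_isometry_invariant (d : ℕ) (p : EuclideanSpace ℝ (Fin d) → ℝ)
    (hp : IsProbDensity d p)
    (A : Matrix (Fin d) (Fin d) ℝ) (hA : Aᵀ * A = 1) (b : EuclideanSpace ℝ (Fin d)) :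
    ∀ (x₁ x₂ : EuclideanSpace ℝ (Fin d)) (Γ : ℝ), 0 < Γ →
      IEM d (fun x => p (mvE d Aᵀ (x - b))) Γ
          (mvE d A x₁ + b) (mvE d A x₂ + b)
        = IEM d p Γ x₁ x₂ := by
  intro x₁ x₂ Γ _
  set e := orthEquiv A hA with he
  have hφ : (fun x => p (mvE d Aᵀ (x - b))) = fun x => p (e.symm (x - b)) := rfl
  unfold IEM
  congr 2
  unfold IEMsq
  apply lintegral_congr
  intro γ
  -- rewrite the inner integrand
  have hpt : ∀ x w, scoreFn d (fun x => p (mvE d Aᵀ (x - b))) γ (γ • (mvE d A x + b) + w)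
      = e (scoreFn d p γ (γ • x + e.symm w)) := by
    intro x w
    rw [hφ, score_shift e b p γ]
    congr 2
    have hm : mvE d A x = e x := rfl
    have : γ • (mvE d A x + b) + w - γ • b = e (γ • x) + w := by
      rw [hm, _root_.map_smul]
      module
    rw [this, map_add, e.symm_apply_apply]
  calc ∫⁻ w, ENNReal.ofReal
        (‖scoreFn d (fun x => p (mvE d Aᵀ (x - b))) γ (γ • (mvE d A x₁ + b) + w)
          - scoreFn d (fun x => p (mvE d Aᵀ (x - b))) γ (γ • (mvE d A x₂ + b) + w)‖ ^ 2
          * gaussDensity d γ w)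
      = ∫⁻ w, ENNReal.ofReal
        (‖scoreFn d p γ (γ • x₁ + e.symm w) - scoreFn d p γ (γ • x₂ + e.symm w)‖ ^ 2
          * gaussDensity d γ (e.symm w)) := by
        apply lintegral_congr
        intro w
        rw [hpt x₁ w, hpt x₂ w, ← map_sub, e.norm_map,
          gaussDensity_congr γ (e.symm.norm_map w).symm]
    _ = ∫⁻ w, ENNReal.ofReal
        (‖scoreFn d p γ (γ • x₁ + w) - scoreFn d p γ (γ • x₂ + w)‖ ^ 2
          * gaussDensity d γ w) := by
        exact e.symm.measurePreserving.lintegral_comp_emb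
          e.symm.toHomeomorph.measurableEmbedding
          (fun w => ENNReal.ofReal
            (‖scoreFn d p γ (γ • x₁ + w) - scoreFn d p γ (γ • x₂ + w)‖ ^ 2
              * gaussDensity d γ w))
end
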